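/- With the s-dependent orthogonal family setup, define κ_n(s)² := 2πi/h_n(s), B_n(s) := −p_{n+1}(0,s)/p_n(0,s) and, for n ≥ 1, C_n(s) := B_n(s)·h_n(s)/h_{n−1}(s), and assume the recursion z·(p_n(z,s) + C_n(s) p_{n−1}(z,s)) = p_{n+1}(z,s) + B_n(s) p_n(z,s) holds for all n ≥ 1 and s > 0. Then for every n ≥ 1 and s > 0: B_n(s) − C_n(s) = −(d/ds κ_n(s)²)/(2 κ_n(s)²). -/

import Mathlib

open Polynomial

open Metric


lemma aux_sphere_ne (z : ℂ) (hz : z ∈ sphere (0:ℂ) 1) : z ≠ 0 := by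
  intro h0; rw [h0] at hz; simp at hz

lemma aux_contOn_weight (s : ℝ) :
    ContinuousOn (fun z : ℂ => Complex.exp (s*(z+z⁻¹))) (sphere (0:ℂ) 1) := by
  apply Complex.continuous_exp.comp_continuousOn
  exact (continuous_const.continuousOn.mul
    (continuous_id.continuousOn.add (continuousOn_inv₀.mono (by
      intro z hz; exact aux_sphere_ne z hz))))

lemma aux_integrable (a b : Polynomial ℂ) (g : ℂ → ℂ)
    (hg : ContinuousOn g (sphere (0:ℂ) 1)) :
    CircleIntegrable (fun z => a.eval z * b.eval z⁻¹ * g z / z) 0 1 := by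
  apply ContinuousOn.circleIntegrable zero_le_one
  have hinv : ContinuousOn (fun z : ℂ => z⁻¹) (sphere (0:ℂ) 1) :=
    continuousOn_inv₀.mono (by intro z hzz; exact aux_sphere_ne z hzz)
  exact ((((a.continuous_aeval.continuousOn.mul
      (b.continuous_aeval.comp_continuousOn hinv)).mul hg)).div
      continuous_id.continuousOn aux_sphere_ne)

lemma aux_integrable_smul (c : ℂ) (a b : Polynomial ℂ) (g : ℂ → ℂ)
    (hg : ContinuousOn g (sphere (0:ℂ) 1)) :
    CircleIntegrable (fun z => c • (a.eval z * b.eval z⁻¹ * g z / z)) 0 1 := by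
  apply ContinuousOn.circleIntegrable zero_le_one
  exact ContinuousOn.const_smul (by
    have := aux_integrable a b g hg
    have hinv : ContinuousOn (fun z : ℂ => z⁻¹) (sphere (0:ℂ) 1) :=
      continuousOn_inv₀.mono (by intro z hzz; exact aux_sphere_ne z hzz)
    exact ((((a.continuous_aeval.continuousOn.mul
        (b.continuous_aeval.comp_continuousOn hinv)).mul hg)).div
        continuous_id.continuousOn aux_sphere_ne)) c

lemma aux_int_zero (b : Polynomial ℂ) (g : ℂ → ℂ) :
    ((∮ z in C(0, 1), (0:Polynomial ℂ).eval z * b.eval z⁻¹ * g z / z) = 0) ∧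
    ((∮ z in C(0, 1), b.eval z * (0:Polynomial ℂ).eval z⁻¹ * g z / z) = 0) := by
  constructor <;>
  · have : ∀ z : ℂ, (0:ℂ) = 0 := fun _ => rfl
    simp [circleIntegral]

lemma aux_orth_ext
    (p : ℕ → ℝ → Polynomial ℂ)
    (hmonic : ∀ n s, 0 < s → (p n s).Monic)
    (hdeg : ∀ n s, 0 < s → (p n s).natDegree = n)
    (horth : ∀ (n m : ℕ) (s : ℝ), 0 < s → n ≠ m →
      (∮ z in C(0, 1), (p n s).eval z * (p m s).eval z⁻¹ *
        Complex.exp (s * (z + z⁻¹)) / z) = 0)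
    (n : ℕ) (s : ℝ) (hs : 0 < s)
    (q : Polynomial ℂ) (hq : ∀ k, n ≤ k → q.coeff k = 0) :
    ((∮ z in C(0, 1), q.eval z * (p n s).eval z⁻¹ * Complex.exp (s * (z + z⁻¹)) / z) = 0) ∧
    ((∮ z in C(0, 1), (p n s).eval z * q.eval z⁻¹ * Complex.exp (s * (z + z⁻¹)) / z) = 0) := by
  set g : ℂ → ℂ := fun z => Complex.exp (s * (z + z⁻¹)) with hg
  have main : ∀ m : ℕ, ∀ q : Polynomial ℂ, q.natDegree ≤ m → (∀ k, n ≤ k → q.coeff k = 0) →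
      ((∮ z in C(0, 1), q.eval z * (p n s).eval z⁻¹ * g z / z) = 0) ∧
      ((∮ z in C(0, 1), (p n s).eval z * q.eval z⁻¹ * g z / z) = 0) := by
    intro m
    induction m with
    | zero =>
      intro q hq0 hqc
      by_cases hz : q = 0
      · subst hz; exact ⟨(aux_int_zero _ g).1, (aux_int_zero _ g).2⟩
      · -- q is a nonzero constant, n ≥ 1
        have hn0 : n ≠ 0 := by
          intro h0; subst h0
          exact hz (Polynomial.ext fun k => by simpa using hqc k (Nat.zero_le k))
        have hp1 : p 0 s = 1 :=
          (hmonic 0 s hs).natDegree_eq_zero.mp (hdeg 0 s hs)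
        have hqC : q = Polynomial.C (q.coeff 0) := (Polynomial.eq_C_of_natDegree_le_zero hq0)
        constructor
        · have e1 : (fun z : ℂ => q.eval z * (p n s).eval z⁻¹ * g z / z)
              = fun z => (q.coeff 0) • ((p 0 s).eval z * (p n s).eval z⁻¹ * g z / z) := by
            funext z
            rw [hp1]
            conv_lhs => rw [hqC]
            simp only [hp1, Polynomial.eval_C, Polynomial.eval_one, smul_eq_mul, one_mul]
            ring
          rw [e1, circleIntegral.integral_smul, horth 0 n s hs (Ne.symm hn0), smul_zero]
        · have e1 : (fun z : ℂ => (p n s).eval z * q.eval z⁻¹ * g z / z)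
              = fun z => (q.coeff 0) • ((p n s).eval z * (p 0 s).eval z⁻¹ * g z / z) := by
            funext z
            rw [hp1]
            conv_lhs => rw [hqC]
            simp [smul_eq_mul]; ring
          rw [e1, circleIntegral.integral_smul, horth n 0 s hs hn0, smul_zero]
    | succ m ih =>
      intro q hq0 hqc
      by_cases hle : q.natDegree ≤ m
      · exact ih q hle hqc
      · have hdq : q.natDegree = m + 1 := le_antisymm hq0 (Nat.succ_le_of_lt (Nat.not_le.mp hle))
        have hq0' : q ≠ 0 := by
          intro h0; rw [h0] at hdq; simp at hdq
        have hmn : m + 1 < n := by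
          rcases Nat.lt_or_ge (m+1) n with h | h
          · exact h
          · exact absurd (hqc q.natDegree (by omega)) (Polynomial.leadingCoeff_ne_zero.mpr hq0')
        set c : ℂ := q.coeff (m+1) with hc
        set r : Polynomial ℂ := q - Polynomial.C c * p (m+1) s with hr
        have hqr : q = Polynomial.C c * p (m+1) s + r := by rw [hr]; ring
        have hpm : (p (m+1) s).natDegree = m + 1 := hdeg (m+1) s hs
        have hpc : (p (m+1) s).coeff (m+1) = 1 := by
          have := (hmonic (m+1) s hs)
          rw [Polynomial.Monic, Polynomial.leadingCoeff, hpm] at this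
          exact this
        have hrdeg : r.natDegree ≤ m := by
          apply Polynomial.natDegree_le_iff_coeff_eq_zero.mpr
          intro k hk
          rw [hr]
          simp only [Polynomial.coeff_sub, Polynomial.coeff_C_mul]
          rcases Nat.lt_or_ge (m+1) k with h | h
          · have h1 : q.natDegree < k := by omega
            have h2 : (p (m+1) s).natDegree < k := by rw [hpm]; omega
            rw [Polynomial.coeff_eq_zero_of_natDegree_lt h1,
              Polynomial.coeff_eq_zero_of_natDegree_lt h2]
            ring
          · have hkm : k = m + 1 := le_antisymm h hk
            rw [hkm, hpc, ← hc]; ring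
        have hrc : ∀ k, n ≤ k → r.coeff k = 0 := by
          intro k hk
          rw [hr]
          simp only [Polynomial.coeff_sub, Polynomial.coeff_C_mul]
          have hplt : (p (m+1) s).natDegree < k := by rw [hpm]; omega
          rw [hqc k hk, Polynomial.coeff_eq_zero_of_natDegree_lt hplt]
          ring
        obtain ⟨ihr1, ihr2⟩ := ih r hrdeg hrc
        constructor
        · have e1 : (fun z : ℂ => r.eval z * (p n s).eval z⁻¹ * g z / z)
              = fun z => q.eval z * (p n s).eval z⁻¹ * g z / z
                - c • ((p (m+1) s).eval z * (p n s).eval z⁻¹ * g z / z) := by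
            funext z
            rw [hr]
            simp only [Polynomial.eval_sub, Polynomial.eval_mul, Polynomial.eval_C, smul_eq_mul]
            ring
          have e2 := circleIntegral.integral_sub
            (aux_integrable q (p n s) g (aux_contOn_weight s))
            (aux_integrable_smul c (p (m+1) s) (p n s) g (aux_contOn_weight s))
          rw [e1, e2, circleIntegral.integral_smul, horth (m+1) n s hs (Nat.ne_of_lt hmn),
            smul_zero, sub_zero] at ihr1
          exact ihr1
        · have e1 : (fun z : ℂ => (p n s).eval z * r.eval z⁻¹ * g z / z)
              = fun z => (p n s).eval z * q.eval z⁻¹ * g z / z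
                - c • ((p n s).eval z * (p (m+1) s).eval z⁻¹ * g z / z) := by
            funext z
            rw [hr]
            simp only [Polynomial.eval_sub, Polynomial.eval_mul, Polynomial.eval_C, smul_eq_mul]
            ring
          have e2 := circleIntegral.integral_sub
            (aux_integrable (p n s) q g (aux_contOn_weight s))
            (aux_integrable_smul c (p n s) (p (m+1) s) g (aux_contOn_weight s))
          rw [e1, e2, circleIntegral.integral_smul, horth n (m+1) s hs (Nat.ne_of_lt hmn).symm,
            smul_zero, sub_zero] at ihr2
          exact ihr2
  exact main q.natDegree q le_rfl hq

lemma aux_contOn_omega : ContinuousOn (fun z : ℂ => z + z⁻¹) (sphere (0:ℂ) 1) :=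
  continuous_id.continuousOn.add (continuousOn_inv₀.mono (by
    intro z hz; exact aux_sphere_ne z hz))

lemma aux_contOn_weight' (s : ℝ) :
    ContinuousOn (fun z : ℂ => Complex.exp (s*(z+z⁻¹))) (sphere (0:ℂ) 1) :=
  Complex.continuous_exp.comp_continuousOn (continuous_const.continuousOn.mul aux_contOn_omega)

lemma aux_eval_bound (P : Polynomial ℂ) (z : ℂ) (hz : ‖z‖ = 1) :
    ‖P.eval z‖ ≤ ∑ k ∈ Finset.range (P.natDegree + 1), ‖P.coeff k‖ := by
  rw [Polynomial.eval_eq_sum_range]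
  refine (norm_sum_le _ _).trans ?_
  apply Finset.sum_le_sum
  intro i _
  rw [norm_mul, norm_pow, hz, one_pow, mul_one]

lemma aux_omega_bound (z : ℂ) (hz : ‖z‖ = 1) : ‖z + z⁻¹‖ ≤ 2 := by
  refine (norm_add_le _ _).trans ?_
  rw [norm_inv, hz]; norm_num

lemma aux_hasDerivAt (a b : Polynomial ℂ) (s₀ : ℝ) :
    HasDerivAt (fun s : ℝ => ∮ z in C(0,1),
        a.eval z * b.eval z⁻¹ * Complex.exp (s*(z+z⁻¹)) / z)
      (∮ z in C(0,1), a.eval z * b.eval z⁻¹ *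
        ((z+z⁻¹) * Complex.exp (s₀*(z+z⁻¹))) / z) s₀ := by
  rw [hasDerivAt_iff_isLittleO]
  set D : ℂ := ∮ z in C(0,1), a.eval z * b.eval z⁻¹ *
    ((z+z⁻¹) * Complex.exp (s₀*(z+z⁻¹))) / z with hD
  set gfull : ℝ → ℂ → ℂ := fun s z =>
    Complex.exp (s*(z+z⁻¹)) - Complex.exp (s₀*(z+z⁻¹))
      - ((s - s₀ : ℝ):ℂ) * ((z+z⁻¹) * Complex.exp (s₀*(z+z⁻¹))) with hgfull
  have hgcont : ∀ s : ℝ, ContinuousOn (gfull s) (sphere (0:ℂ) 1) := by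
    intro s
    exact ((aux_contOn_weight' s).sub (aux_contOn_weight' s₀)).sub
      (continuous_const.continuousOn.mul
        (aux_contOn_omega.mul (aux_contOn_weight' s₀)))
  have key : ∀ s : ℝ,
      (∮ z in C(0,1), a.eval z * b.eval z⁻¹ * Complex.exp (s*(z+z⁻¹)) / z)
        - (∮ z in C(0,1), a.eval z * b.eval z⁻¹ * Complex.exp (s₀*(z+z⁻¹)) / z)
        - (s - s₀) • D
      = ∮ z in C(0,1), a.eval z * b.eval z⁻¹ * gfull s z / z := by
    intro s
    have gdiff : ℂ → ℂ := fun z => Complex.exp (s*(z+z⁻¹)) - Complex.exp (s₀*(z+z⁻¹))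
    have e1 : (fun z : ℂ => a.eval z * b.eval z⁻¹ * gfull s z / z)
        = fun z => a.eval z * b.eval z⁻¹ *
            (Complex.exp (s*(z+z⁻¹)) - Complex.exp (s₀*(z+z⁻¹))) / z
          - ((s - s₀ : ℝ):ℂ) • (a.eval z * b.eval z⁻¹ *
            ((z+z⁻¹) * Complex.exp (s₀*(z+z⁻¹))) / z) := by
      funext z
      simp only [hgfull, smul_eq_mul]
      ring
    have e2 : (fun z : ℂ => a.eval z * b.eval z⁻¹ *
          (Complex.exp (s*(z+z⁻¹)) - Complex.exp (s₀*(z+z⁻¹))) / z)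
        = fun z => a.eval z * b.eval z⁻¹ * Complex.exp (s*(z+z⁻¹)) / z
          - a.eval z * b.eval z⁻¹ * Complex.exp (s₀*(z+z⁻¹)) / z := by
      funext z; ring
    rw [e1, circleIntegral.integral_sub
        (aux_integrable a b (fun z => Complex.exp (s*(z+z⁻¹)) - Complex.exp (s₀*(z+z⁻¹)))
          ((aux_contOn_weight' s).sub (aux_contOn_weight' s₀)))
        (aux_integrable_smul _ a b (fun z => (z+z⁻¹) * Complex.exp (s₀*(z+z⁻¹)))
          (aux_contOn_omega.mul (aux_contOn_weight' s₀))),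
      e2, circleIntegral.integral_sub
        (aux_integrable a b _ (aux_contOn_weight' s))
        (aux_integrable a b _ (aux_contOn_weight' s₀)),
      circleIntegral.integral_smul]
    rw [Complex.real_smul, smul_eq_mul, ← hD]
  have bigO : (fun s : ℝ => (∮ z in C(0,1), a.eval z * b.eval z⁻¹ * gfull s z / z))
      =O[nhds s₀] fun s => (s - s₀)^2 := by
    set Ca : ℝ := ∑ k ∈ Finset.range (a.natDegree + 1), ‖a.coeff k‖ with hCa
    set Cb : ℝ := ∑ k ∈ Finset.range (b.natDegree + 1), ‖b.coeff k‖ with hCb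
    have hCa0 : 0 ≤ Ca := Finset.sum_nonneg fun _ _ => norm_nonneg _
    have hCb0 : 0 ≤ Cb := Finset.sum_nonneg fun _ _ => norm_nonneg _
    apply Asymptotics.IsBigO.of_bound (2 * Real.pi * 1 * (Ca * Cb * (4 * Real.exp (2*|s₀|))))
    have hev : ∀ᶠ s : ℝ in nhds s₀, |s - s₀| ≤ 1/2 := by
      have : Metric.closedBall s₀ (1/2) ∈ nhds s₀ := Metric.closedBall_mem_nhds s₀ (by norm_num)
      filter_upwards [this] with s hs
      simpa [Real.dist_eq] using hs
    filter_upwards [hev] with s hs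
    have hbound : ∀ z ∈ sphere (0:ℂ) 1,
        ‖a.eval z * b.eval z⁻¹ * gfull s z / z‖ ≤ Ca * Cb * (4 * Real.exp (2*|s₀|)) * (s - s₀)^2 := by
      intro z hzs
      have hz1 : ‖z‖ = 1 := by simpa using hzs
      have hzinv : ‖z⁻¹‖ = 1 := by rw [norm_inv, hz1]; norm_num
      have hgb : ‖gfull s z‖ ≤ 4 * Real.exp (2*|s₀|) * (s - s₀)^2 := by
        set ω : ℂ := z + z⁻¹ with hω
        have hωb : ‖ω‖ ≤ 2 := aux_omega_bound z hz1
        set x : ℂ := ((s - s₀ : ℝ):ℂ) * ω with hx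
        have hxb : ‖x‖ ≤ 2 * |s - s₀| := by
          rw [hx, norm_mul, Complex.norm_real, Real.norm_eq_abs]
          calc |s - s₀| * ‖ω‖ ≤ |s - s₀| * 2 := by
                exact mul_le_mul_of_nonneg_left hωb (abs_nonneg _)
            _ = 2 * |s - s₀| := by ring
        have hx1 : ‖x‖ ≤ 1 := hxb.trans (by linarith)
        have hrw : gfull s z = Complex.exp ((s₀:ℂ)*ω) * (Complex.exp x - 1 - x) := by
          have : (s:ℂ)*ω = (s₀:ℂ)*ω + x := by push_cast [hx]; ring
          simp only [hgfull]
          rw [← hω, this, Complex.exp_add, hx]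
          ring
        rw [hrw, norm_mul]
        have h1 : ‖Complex.exp ((s₀:ℂ)*ω)‖ ≤ Real.exp (2*|s₀|) := by
          rw [Complex.norm_exp]
          apply Real.exp_le_exp.mpr
          have : ((s₀:ℂ)*ω).re = s₀ * ω.re := by simp [Complex.mul_re]
          rw [this]
          calc s₀ * ω.re ≤ |s₀ * ω.re| := le_abs_self _
            _ = |s₀| * |ω.re| := abs_mul _ _
            _ ≤ |s₀| * 2 := by
                apply mul_le_mul_of_nonneg_left _ (abs_nonneg _)
                exact (Complex.abs_re_le_norm ω).trans hωb
            _ = 2*|s₀| := by ring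
        have h2 : ‖Complex.exp x - 1 - x‖ ≤ (2*|s-s₀|)^2 := by
          calc ‖Complex.exp x - 1 - x‖ ≤ ‖x‖^2 := by
                exact Complex.norm_exp_sub_one_sub_id_le hx1
            _ ≤ (2*|s-s₀|)^2 := by
                apply pow_le_pow_left₀ (norm_nonneg _) hxb
        calc ‖Complex.exp ((s₀:ℂ)*ω)‖ * ‖Complex.exp x - 1 - x‖
            ≤ Real.exp (2*|s₀|) * (2*|s-s₀|)^2 :=
              mul_le_mul h1 h2 (norm_nonneg _) (Real.exp_nonneg _)
          _ = 4 * Real.exp (2*|s₀|) * (s - s₀)^2 := by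
              rw [mul_pow, sq_abs]; ring
      rw [norm_div, norm_mul, norm_mul, hz1, div_one]
      calc ‖a.eval z‖ * ‖b.eval z⁻¹‖ * ‖gfull s z‖
          ≤ Ca * Cb * (4 * Real.exp (2*|s₀|) * (s - s₀)^2) := by
            apply mul_le_mul
            · exact mul_le_mul (aux_eval_bound a z hz1) (by
                  have := aux_eval_bound b z⁻¹ hzinv; exact this)
                (norm_nonneg _) hCa0
            · exact hgb
            · exact norm_nonneg _
            · exact mul_nonneg hCa0 hCb0
        _ = Ca * Cb * (4 * Real.exp (2*|s₀|)) * (s - s₀)^2 := by ring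
    have := circleIntegral.norm_integral_le_of_norm_le_const (c := (0:ℂ)) (R := 1)
      zero_le_one hbound
    calc ‖∮ z in C(0,1), a.eval z * b.eval z⁻¹ * gfull s z / z‖
        ≤ 2 * Real.pi * 1 * (Ca * Cb * (4 * Real.exp (2*|s₀|)) * (s - s₀)^2) := by
          simpa using this
      _ = 2 * Real.pi * 1 * (Ca * Cb * (4 * Real.exp (2*|s₀|))) * ‖(s - s₀)^2‖ := by
          rw [Real.norm_eq_abs, abs_pow, sq_abs]; ring
    -- done?
  have littleo : (fun s : ℝ => (s - s₀)^2) =o[nhds s₀] fun s => s - s₀ := by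
    have h1 : (fun s : ℝ => s - s₀) =o[nhds s₀] (fun _ => (1:ℝ)) := by
      rw [Asymptotics.isLittleO_one_iff]
      have : Filter.Tendsto (fun s : ℝ => s - s₀) (nhds s₀) (nhds (s₀ - s₀)) :=
        (continuous_id.sub continuous_const).continuousAt
      simpa using this
    have := h1.mul_isBigO (Asymptotics.isBigO_refl (fun s : ℝ => s - s₀) (nhds s₀))
    simpa [pow_two] using this
  have : (fun s : ℝ => (∮ z in C(0,1), a.eval z * b.eval z⁻¹ * Complex.exp (s*(z+z⁻¹)) / z)
        - (∮ z in C(0,1), a.eval z * b.eval z⁻¹ * Complex.exp (s₀*(z+z⁻¹)) / z)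
        - (s - s₀) • D)
      =o[nhds s₀] fun s => s - s₀ := by
    have heq : (fun s : ℝ => (∮ z in C(0,1), a.eval z * b.eval z⁻¹ * Complex.exp (s*(z+z⁻¹)) / z)
        - (∮ z in C(0,1), a.eval z * b.eval z⁻¹ * Complex.exp (s₀*(z+z⁻¹)) / z)
        - (s - s₀) • D)
        = fun s => ∮ z in C(0,1), a.eval z * b.eval z⁻¹ * gfull s z / z := funext key
    rw [heq]
    exact bigO.trans_isLittleO littleo
  exact this


lemma aux_coeff_high (P : Polynomial ℂ) (m : ℕ) (hP : P.Monic) (hPd : P.natDegree = m)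
    (k : ℕ) (hk : m ≤ k) : P.coeff k = if k = m then 1 else 0 := by
  by_cases hkm : k = m
  · subst hkm
    simp only [if_pos rfl]
    have := hP
    rw [Polynomial.Monic, Polynomial.leadingCoeff, hPd] at this
    exact this
  · rw [if_neg hkm]
    exact Polynomial.coeff_eq_zero_of_natDegree_lt (by omega)

lemma aux_eval_bound' (P : Polynomial ℂ) (N : ℕ) (hN : P.natDegree < N) (z : ℂ)
    (hz : ‖z‖ = 1) : ‖P.eval z‖ ≤ ∑ k ∈ Finset.range N, ‖P.coeff k‖ := by
  rw [Polynomial.eval_eq_sum_range' hN]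
  refine (norm_sum_le _ _).trans ?_
  apply Finset.sum_le_sum
  intro i _
  rw [norm_mul, norm_pow, hz, one_pow, mul_one]

lemma aux_replace_left
    (p : ℕ → ℝ → Polynomial ℂ)
    (hmonic : ∀ n s, 0 < s → (p n s).Monic)
    (hdeg : ∀ n s, 0 < s → (p n s).natDegree = n)
    (horth : ∀ (n m : ℕ) (s : ℝ), 0 < s → n ≠ m →
      (∮ z in C(0, 1), (p n s).eval z * (p m s).eval z⁻¹ *
        Complex.exp (s * (z + z⁻¹)) / z) = 0)
    (n : ℕ) (t : ℝ) (ht : 0 < t)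
    (a b : Polynomial ℂ) (hab : ∀ k, n ≤ k → a.coeff k = b.coeff k) :
    (∮ z in C(0, 1), a.eval z * (p n t).eval z⁻¹ * Complex.exp (t * (z + z⁻¹)) / z)
      = ∮ z in C(0, 1), b.eval z * (p n t).eval z⁻¹ * Complex.exp (t * (z + z⁻¹)) / z := by
  have hq : ∀ k, n ≤ k → (a - b).coeff k = 0 := by
    intro k hk; rw [Polynomial.coeff_sub, hab k hk, sub_self]
  have h0 := (aux_orth_ext p hmonic hdeg horth n t ht (a - b) hq).1
  have e1 : (fun z : ℂ => (a-b).eval z * (p n t).eval z⁻¹ * Complex.exp (t * (z + z⁻¹)) / z)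
      = fun z => a.eval z * (p n t).eval z⁻¹ * Complex.exp (t * (z + z⁻¹)) / z
        - b.eval z * (p n t).eval z⁻¹ * Complex.exp (t * (z + z⁻¹)) / z := by
    funext z; rw [Polynomial.eval_sub]; ring
  rw [e1, circleIntegral.integral_sub
      (aux_integrable a (p n t) _ (aux_contOn_weight t))
      (aux_integrable b (p n t) _ (aux_contOn_weight t)), sub_eq_zero] at h0
  exact h0

lemma aux_replace_right
    (p : ℕ → ℝ → Polynomial ℂ)
    (hmonic : ∀ n s, 0 < s → (p n s).Monic)
    (hdeg : ∀ n s, 0 < s → (p n s).natDegree = n)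
    (horth : ∀ (n m : ℕ) (s : ℝ), 0 < s → n ≠ m →
      (∮ z in C(0, 1), (p n s).eval z * (p m s).eval z⁻¹ *
        Complex.exp (s * (z + z⁻¹)) / z) = 0)
    (n : ℕ) (t : ℝ) (ht : 0 < t)
    (a b : Polynomial ℂ) (hab : ∀ k, n ≤ k → a.coeff k = b.coeff k) :
    (∮ z in C(0, 1), (p n t).eval z * a.eval z⁻¹ * Complex.exp (t * (z + z⁻¹)) / z)
      = ∮ z in C(0, 1), (p n t).eval z * b.eval z⁻¹ * Complex.exp (t * (z + z⁻¹)) / z := by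
  have hq : ∀ k, n ≤ k → (a - b).coeff k = 0 := by
    intro k hk; rw [Polynomial.coeff_sub, hab k hk, sub_self]
  have h0 := (aux_orth_ext p hmonic hdeg horth n t ht (a - b) hq).2
  have e1 : (fun z : ℂ => (p n t).eval z * (a-b).eval z⁻¹ * Complex.exp (t * (z + z⁻¹)) / z)
      = fun z => (p n t).eval z * a.eval z⁻¹ * Complex.exp (t * (z + z⁻¹)) / z
        - (p n t).eval z * b.eval z⁻¹ * Complex.exp (t * (z + z⁻¹)) / z := by
    funext z; rw [Polynomial.eval_sub]; ring
  rw [e1, circleIntegral.integral_sub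
      (aux_integrable (p n t) a _ (aux_contOn_weight t))
      (aux_integrable (p n t) b _ (aux_contOn_weight t)), sub_eq_zero] at h0
  exact h0

/-- Lemma 6 (i): `B_n − C_n = −(κ_n²)′/(2κ_n²)` where `κ_n(s)² = 2πi/h_n(s)`. -/
theorem stmt_13
    (p : ℕ → ℝ → Polynomial ℂ)
    (hmonic : ∀ n s, 0 < s → (p n s).Monic)
    (hdeg : ∀ n s, 0 < s → (p n s).natDegree = n)
    (hreal : ∀ n s, 0 < s → ∀ k, ((p n s).coeff k).im = 0)
    (hp0 : ∀ n s, 0 < s → (p n s).coeff 0 ≠ 0)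
    (horth : ∀ (n m : ℕ) (s : ℝ), 0 < s → n ≠ m →
      (∮ z in C(0, 1), (p n s).eval z * (p m s).eval z⁻¹ *
        Complex.exp (s * (z + z⁻¹)) / z) = 0)
    (h : ℕ → ℝ → ℂ)
    (hh : ∀ (n : ℕ) (s : ℝ), 0 < s → h n s =
      ∮ z in C(0, 1), (p n s).eval z * (p n s).eval z⁻¹ *
        Complex.exp (s * (z + z⁻¹)) / z)
    (hne : ∀ (n : ℕ) (s : ℝ), 0 < s → h n s ≠ 0)
    (hcoeffdiff : ∀ (n k : ℕ), k ≤ n →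
      DifferentiableOn ℝ (fun s => (p n s).coeff k) (Set.Ioi (0 : ℝ)))
    (κsq : ℕ → ℝ → ℂ)
    (hκ : ∀ (n : ℕ) (s : ℝ), κsq n s = 2 * Real.pi * Complex.I / h n s)
    (Bn Cn : ℕ → ℝ → ℂ)
    (hB : ∀ (n : ℕ) (s : ℝ), 0 < s → Bn n s = -((p (n + 1) s).coeff 0 / (p n s).coeff 0))
    (hC : ∀ (n : ℕ) (s : ℝ), 1 ≤ n → 0 < s → Cn n s = Bn n s * h n s / h (n - 1) s)
    (hrec : ∀ (n : ℕ) (s : ℝ), 1 ≤ n → 0 < s →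
      Polynomial.X * (p n s + Polynomial.C (Cn n s) * p (n - 1) s) =
        p (n + 1) s + Polynomial.C (Bn n s) * p n s)
    (n : ℕ) (s : ℝ) (hn : 1 ≤ n) (hs : 0 < s) :
    Bn n s - Cn n s = -(deriv (κsq n) s) / (2 * κsq n s) := by
  classical
  -- The circle-integral representation of h n as a function of the parameter
  set H : ℝ → ℂ := fun t => ∮ z in C(0, 1), (p n t).eval z * (p n t).eval z⁻¹ *
      Complex.exp (t * (z + z⁻¹)) / z with hHdef
  set F : ℝ → ℂ := fun t => ∮ z in C(0, 1), (p n s).eval z * (p n s).eval z⁻¹ *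
      Complex.exp (t * (z + z⁻¹)) / z with hFdef
  set D : ℂ := ∮ z in C(0, 1), (p n s).eval z * (p n s).eval z⁻¹ *
      ((z + z⁻¹) * Complex.exp (s * (z + z⁻¹))) / z with hDdef
  have hFD : HasDerivAt F D s := aux_hasDerivAt (p n s) (p n s) s
  -- coefficients of p n t agree with p n s in high degrees
  have hhigh : ∀ t : ℝ, 0 < t → ∀ k, n ≤ k → (p n t).coeff k = (p n s).coeff k := by
    intro t ht k hk
    rw [aux_coeff_high (p n t) n (hmonic n t ht) (hdeg n t ht) k hk,
      aux_coeff_high (p n s) n (hmonic n s hs) (hdeg n s hs) k hk]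
  -- The correction term R
  have hRform : ∀ t : ℝ, 0 < t → H t - F t =
      ∮ z in C(0, 1), (p n s).eval z * (p n t - p n s).eval z⁻¹ *
        (Complex.exp (t * (z + z⁻¹)) - Complex.exp (s * (z + z⁻¹))) / z := by
    intro t ht
    have step1 : H t = ∮ z in C(0, 1), (p n s).eval z * (p n t).eval z⁻¹ *
        Complex.exp (t * (z + z⁻¹)) / z :=
      aux_replace_left p hmonic hdeg horth n t ht (p n t) (p n s) (hhigh t ht)
    have step2 : (∮ z in C(0, 1), (p n s).eval z * (p n t - p n s).eval z⁻¹ *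
        Complex.exp (t * (z + z⁻¹)) / z) = H t - F t := by
      have e1 : (fun z : ℂ => (p n s).eval z * (p n t - p n s).eval z⁻¹ *
          Complex.exp (t * (z + z⁻¹)) / z)
          = fun z => (p n s).eval z * (p n t).eval z⁻¹ * Complex.exp (t * (z + z⁻¹)) / z
            - (p n s).eval z * (p n s).eval z⁻¹ * Complex.exp (t * (z + z⁻¹)) / z := by
        funext z; rw [Polynomial.eval_sub]; ring
      rw [e1, circleIntegral.integral_sub
          (aux_integrable (p n s) (p n t) _ (aux_contOn_weight t))
          (aux_integrable (p n s) (p n s) _ (aux_contOn_weight t)), ← step1]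
    have hqc : ∀ k, n ≤ k → (p n t - p n s).coeff k = 0 := by
      intro k hk; rw [Polynomial.coeff_sub, hhigh t ht k hk, sub_self]
    have step3 := (aux_orth_ext p hmonic hdeg horth n s hs (p n t - p n s) hqc).2
    have e2 : (fun z : ℂ => (p n s).eval z * (p n t - p n s).eval z⁻¹ *
        (Complex.exp (t * (z + z⁻¹)) - Complex.exp (s * (z + z⁻¹))) / z)
        = fun z => (p n s).eval z * (p n t - p n s).eval z⁻¹ *
            Complex.exp (t * (z + z⁻¹)) / z
          - (p n s).eval z * (p n t - p n s).eval z⁻¹ *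
            Complex.exp (s * (z + z⁻¹)) / z := by
      funext z; ring
    rw [e2, circleIntegral.integral_sub
        (aux_integrable (p n s) (p n t - p n s) _ (aux_contOn_weight t))
        (aux_integrable (p n s) (p n t - p n s) _ (aux_contOn_weight s)),
      step2, step3, sub_zero]
  have hRlittle : (fun t => H t - F t) =o[nhds s] fun t => t - s := by
    set Q : ℝ → ℝ := fun t => ∑ k ∈ Finset.range (n+1),
      ‖(p n t).coeff k - (p n s).coeff k‖ with hQdef
    have hQnonneg : ∀ t, 0 ≤ Q t := fun t =>
      Finset.sum_nonneg fun _ _ => norm_nonneg _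
    have hQO : Q =O[nhds s] fun t => t - s := by
      apply Asymptotics.IsBigO.fun_sum
      intro k hk
      have hkn : k ≤ n := by
        have := Finset.mem_range.mp hk; omega
      have hdiff : DifferentiableAt ℝ (fun t => (p n t).coeff k) s :=
        (hcoeffdiff n k hkn).differentiableAt (Ioi_mem_nhds hs)
      exact hdiff.isBigO_sub.norm_left
    set Ca : ℝ := ∑ k ∈ Finset.range (n+1), ‖(p n s).coeff k‖ with hCadef
    have hCa0 : 0 ≤ Ca := Finset.sum_nonneg fun _ _ => norm_nonneg _
    have hbound : ∀ᶠ t in nhds s, ‖H t - F t‖ ≤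
        (2 * Real.pi * 1 * (Ca * (4 * Real.exp (2*|s|)))) * ‖Q t * (t - s)‖ := by
      have hev1 : ∀ᶠ t : ℝ in nhds s, 0 < t := by
        filter_upwards [Ioi_mem_nhds hs] with t ht
        exact ht
      have hev2 : ∀ᶠ t : ℝ in nhds s, |t - s| ≤ 1/2 := by
        have : Metric.closedBall s (1/2) ∈ nhds s := Metric.closedBall_mem_nhds s (by norm_num)
        filter_upwards [this] with t htb
        simpa [Real.dist_eq] using htb
      filter_upwards [hev1, hev2] with t ht htb
      rw [hRform t ht]
      have hptwise : ∀ z ∈ sphere (0:ℂ) 1,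
          ‖(p n s).eval z * (p n t - p n s).eval z⁻¹ *
            (Complex.exp (t * (z + z⁻¹)) - Complex.exp (s * (z + z⁻¹))) / z‖
          ≤ Ca * (4 * Real.exp (2*|s|)) * (Q t * |t - s|) := by
        intro z hzs
        have hz1 : ‖z‖ = 1 := by simpa using hzs
        have hzinv : ‖z⁻¹‖ = 1 := by rw [norm_inv, hz1]; norm_num
        have h1 : ‖(p n s).eval z‖ ≤ Ca :=
          aux_eval_bound' (p n s) (n+1) (by rw [hdeg n s hs]; omega) z hz1
        have h2 : ‖(p n t - p n s).eval z⁻¹‖ ≤ Q t := by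
          apply aux_eval_bound' (p n t - p n s) (n+1) ?_ z⁻¹ hzinv |>.trans
          · apply le_of_eq
            apply Finset.sum_congr rfl
            intro k _
            rw [Polynomial.coeff_sub]
          · calc (p n t - p n s).natDegree
                ≤ max (p n t).natDegree (p n s).natDegree := Polynomial.natDegree_sub_le _ _
              _ < n + 1 := by rw [hdeg n t ht, hdeg n s hs]; omega
        have h3 : ‖Complex.exp (t * (z + z⁻¹)) - Complex.exp (s * (z + z⁻¹))‖
            ≤ 4 * Real.exp (2*|s|) * |t - s| := by
          set ω : ℂ := z + z⁻¹ with hω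
          have hωb : ‖ω‖ ≤ 2 := aux_omega_bound z hz1
          set x : ℂ := ((t - s : ℝ):ℂ) * ω with hx
          have hxb : ‖x‖ ≤ 2 * |t - s| := by
            rw [hx, norm_mul, Complex.norm_real, Real.norm_eq_abs]
            calc |t - s| * ‖ω‖ ≤ |t - s| * 2 :=
                  mul_le_mul_of_nonneg_left hωb (abs_nonneg _)
              _ = 2 * |t - s| := by ring
          have hx1 : ‖x‖ ≤ 1 := hxb.trans (by linarith)
          have hrw : Complex.exp (t * (z + z⁻¹)) - Complex.exp (s * (z + z⁻¹))
              = Complex.exp ((s:ℂ)*ω) * (Complex.exp x - 1) := by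
            have hsum : (t:ℂ)*ω = (s:ℂ)*ω + x := by push_cast [hx]; ring
            rw [← hω, hsum, Complex.exp_add]
            ring
          rw [hrw, norm_mul]
          have hA : ‖Complex.exp ((s:ℂ)*ω)‖ ≤ Real.exp (2*|s|) := by
            rw [Complex.norm_exp]
            apply Real.exp_le_exp.mpr
            have hre : ((s:ℂ)*ω).re = s * ω.re := by simp [Complex.mul_re]
            rw [hre]
            calc s * ω.re ≤ |s * ω.re| := le_abs_self _
              _ = |s| * |ω.re| := abs_mul _ _
              _ ≤ |s| * 2 := by
                  apply mul_le_mul_of_nonneg_left _ (abs_nonneg _)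
                  exact (Complex.abs_re_le_norm ω).trans hωb
              _ = 2*|s| := by ring
          have hB2 : ‖Complex.exp x - 1‖ ≤ 2 * (2 * |t - s|) := by
            calc ‖Complex.exp x - 1‖ ≤ 2 * ‖x‖ := by
                  exact Complex.norm_exp_sub_one_le hx1
              _ ≤ 2 * (2 * |t - s|) := by linarith
          calc ‖Complex.exp ((s:ℂ)*ω)‖ * ‖Complex.exp x - 1‖
              ≤ Real.exp (2*|s|) * (2 * (2 * |t - s|)) :=
                mul_le_mul hA hB2 (norm_nonneg _) (Real.exp_nonneg _)
            _ = 4 * Real.exp (2*|s|) * |t - s| := by ring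
        rw [norm_div, norm_mul, norm_mul, hz1, div_one]
        calc ‖(p n s).eval z‖ * ‖(p n t - p n s).eval z⁻¹‖ *
              ‖Complex.exp (t * (z + z⁻¹)) - Complex.exp (s * (z + z⁻¹))‖
            ≤ Ca * Q t * (4 * Real.exp (2*|s|) * |t - s|) := by
              apply mul_le_mul _ h3 (norm_nonneg _)
                (mul_nonneg hCa0 (hQnonneg t))
              exact mul_le_mul h1 h2 (norm_nonneg _) hCa0
          _ = Ca * (4 * Real.exp (2*|s|)) * (Q t * |t - s|) := by ring
      have hint := circleIntegral.norm_integral_le_of_norm_le_const (c := (0:ℂ)) (R := 1)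
        zero_le_one hptwise
      calc ‖∮ z in C(0, 1), (p n s).eval z * (p n t - p n s).eval z⁻¹ *
            (Complex.exp (t * (z + z⁻¹)) - Complex.exp (s * (z + z⁻¹))) / z‖
          ≤ 2 * Real.pi * 1 * (Ca * (4 * Real.exp (2*|s|)) * (Q t * |t - s|)) := by
            simpa using hint
        _ = (2 * Real.pi * 1 * (Ca * (4 * Real.exp (2*|s|)))) * ‖Q t * (t - s)‖ := by
            rw [Real.norm_eq_abs, abs_mul, abs_of_nonneg (hQnonneg t)]
            ring
    have hO : (fun t => H t - F t) =O[nhds s] fun t => Q t * (t - s) :=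
      Asymptotics.IsBigO.of_bound _ hbound
    have hQo : Q =o[nhds s] (fun _ => (1:ℝ)) := by
      apply hQO.trans_isLittleO
      rw [Asymptotics.isLittleO_one_iff]
      have : Filter.Tendsto (fun t : ℝ => t - s) (nhds s) (nhds (s - s)) :=
        (continuous_id.sub continuous_const).continuousAt
      simpa using this
    have hlittle2 : (fun t => Q t * (t - s)) =o[nhds s] fun t => t - s := by
      have := hQo.mul_isBigO (Asymptotics.isBigO_refl (fun t : ℝ => t - s) (nhds s))
      simpa using this
    exact hO.trans_isLittleO hlittle2
  have hHD : HasDerivAt H D s := by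
    rw [hasDerivAt_iff_isLittleO]
    have heq : (fun t => H t - H s - (t - s) • D)
        = fun t => (F t - F s - (t - s) • D) + (H t - F t) := by
      funext t
      have hFs : F s = H s := rfl
      rw [hFs]; ring
    rw [heq]
    have h1 := hasDerivAt_iff_isLittleO.mp hFD
    simpa using h1.add hRlittle
  have hhH : h n =ᶠ[nhds s] H := by
    filter_upwards [Ioi_mem_nhds hs] with t ht
    exact hh n t ht
  have hhD : HasDerivAt (h n) D s := hHD.congr_of_eventuallyEq hhH
  -- the value of D
  have hDval : D = 2 * (Bn n s - Cn n s) * h n s := by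
    have hHs : h n s = H s := hh n s hs
    -- hab : coefficients of X * p (n-1) s agree with p n s from degree n on
    have hab : ∀ k, n ≤ k → (Polynomial.X * p (n-1) s).coeff k = (p n s).coeff k := by
      intro k hk
      have hk1 : k = (k-1)+1 := by omega
      rw [hk1, Polynomial.coeff_X_mul,
        aux_coeff_high (p (n-1) s) (n-1) (hmonic (n-1) s hs) (hdeg (n-1) s hs) (k-1) (by omega),
        aux_coeff_high (p n s) n (hmonic n s hs) (hdeg n s hs) ((k-1)+1) (by omega)]
      by_cases hkn : k = n
      · rw [if_pos (by omega), if_pos (by omega)]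
      · rw [if_neg (by omega), if_neg (by omega)]
    -- polynomial identity
    have eq1 : Polynomial.X * p n s = (p (n+1) s + Polynomial.C (Bn n s) * p n s)
        - Polynomial.C (Cn n s) * (Polynomial.X * p (n-1) s) := by
      linear_combination hrec n s hn hs
    -- evaluation versions
    have hev : ∀ z : ℂ, (Polynomial.X * p n s).eval z
        = ((p (n+1) s + Polynomial.C (Bn n s) * p n s).eval z)
          - Cn n s * (Polynomial.X * p (n-1) s).eval z := by
      intro z
      rw [eq1]
      simp [Polynomial.eval_sub, Polynomial.eval_mul, Polynomial.eval_C]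
    have heva : ∀ z : ℂ, (p (n+1) s + Polynomial.C (Bn n s) * p n s).eval z
        = (p (n+1) s).eval z + Bn n s * (p n s).eval z := by
      intro z; simp [Polynomial.eval_add, Polynomial.eval_mul, Polynomial.eval_C]
    set E : ℂ → ℂ := fun z => Complex.exp (s * (z + z⁻¹)) with hE
    have hEcont : ContinuousOn E (sphere (0:ℂ) 1) := aux_contOn_weight s
    set a' : Polynomial ℂ := p (n+1) s + Polynomial.C (Bn n s) * p n s with ha'
    -- T1 computation
    have hT1 : (∮ z in C(0, 1), (Polynomial.X * p n s).eval z * (p n s).eval z⁻¹ * E z / z)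
        = (Bn n s - Cn n s) * h n s := by
      have hfa : (∮ z in C(0, 1), a'.eval z * (p n s).eval z⁻¹ * E z / z)
          = Bn n s * h n s := by
        have e4 : (fun z : ℂ => (p (n+1) s).eval z * (p n s).eval z⁻¹ * E z / z)
            = fun z => a'.eval z * (p n s).eval z⁻¹ * E z / z
              - (Bn n s) • ((p n s).eval z * (p n s).eval z⁻¹ * E z / z) := by
          funext z
          rw [ha', heva z]
          simp only [smul_eq_mul]
          ring
        have h0 : (∮ z in C(0, 1), (p (n+1) s).eval z * (p n s).eval z⁻¹ * E z / z) = 0 :=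
          horth (n+1) n s hs (by omega)
        rw [e4, circleIntegral.integral_sub
            (aux_integrable a' (p n s) E hEcont)
            (aux_integrable_smul (Bn n s) (p n s) (p n s) E hEcont),
          circleIntegral.integral_smul, sub_eq_zero] at h0
        rw [h0, smul_eq_mul, hHs]
      have e3 : (fun z : ℂ => (Polynomial.X * p n s).eval z * (p n s).eval z⁻¹ * E z / z)
          = fun z => a'.eval z * (p n s).eval z⁻¹ * E z / z
            - (Cn n s) • ((Polynomial.X * p (n-1) s).eval z * (p n s).eval z⁻¹ * E z / z) := by
        funext z
        rw [hev z]
        simp only [smul_eq_mul]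
        ring
      have hf2 : (∮ z in C(0, 1), (Polynomial.X * p (n-1) s).eval z * (p n s).eval z⁻¹ * E z / z)
          = h n s := by
        rw [aux_replace_left p hmonic hdeg horth n s hs (Polynomial.X * p (n-1) s) (p n s) hab]
        exact (hh n s hs).symm
      rw [e3, circleIntegral.integral_sub
          (aux_integrable a' (p n s) E hEcont)
          (aux_integrable_smul (Cn n s) (Polynomial.X * p (n-1) s) (p n s) E hEcont),
        circleIntegral.integral_smul, hfa, hf2, smul_eq_mul]
      ring
    -- T2 computation
    have hevinv : ∀ z : ℂ, (Polynomial.X * p n s).eval z⁻¹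
        = (a'.eval z⁻¹) - Cn n s * (Polynomial.X * p (n-1) s).eval z⁻¹ := by
      intro z
      rw [eq1]
      simp [Polynomial.eval_sub, Polynomial.eval_mul, Polynomial.eval_C]
    have hevainv : ∀ z : ℂ, a'.eval z⁻¹
        = (p (n+1) s).eval z⁻¹ + Bn n s * (p n s).eval z⁻¹ := by
      intro z; rw [ha']; simp [Polynomial.eval_add, Polynomial.eval_mul, Polynomial.eval_C]
    have hT2 : (∮ z in C(0, 1), (p n s).eval z * (Polynomial.X * p n s).eval z⁻¹ * E z / z)
        = (Bn n s - Cn n s) * h n s := by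
      have hfa : (∮ z in C(0, 1), (p n s).eval z * a'.eval z⁻¹ * E z / z)
          = Bn n s * h n s := by
        have e4 : (fun z : ℂ => (p n s).eval z * (p (n+1) s).eval z⁻¹ * E z / z)
            = fun z => (p n s).eval z * a'.eval z⁻¹ * E z / z
              - (Bn n s) • ((p n s).eval z * (p n s).eval z⁻¹ * E z / z) := by
          funext z
          rw [hevainv z]
          simp only [smul_eq_mul]
          ring
        have h0 : (∮ z in C(0, 1), (p n s).eval z * (p (n+1) s).eval z⁻¹ * E z / z) = 0 :=
          horth n (n+1) s hs (by omega)
        rw [e4, circleIntegral.integral_sub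
            (aux_integrable (p n s) a' E hEcont)
            (aux_integrable_smul (Bn n s) (p n s) (p n s) E hEcont),
          circleIntegral.integral_smul, sub_eq_zero] at h0
        rw [h0, smul_eq_mul, hHs]
      have e3 : (fun z : ℂ => (p n s).eval z * (Polynomial.X * p n s).eval z⁻¹ * E z / z)
          = fun z => (p n s).eval z * a'.eval z⁻¹ * E z / z
            - (Cn n s) • ((p n s).eval z * (Polynomial.X * p (n-1) s).eval z⁻¹ * E z / z) := by
        funext z
        rw [hevinv z]
        simp only [smul_eq_mul]
        ring
      have hf2 : (∮ z in C(0, 1), (p n s).eval z * (Polynomial.X * p (n-1) s).eval z⁻¹ * E z / z)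
          = h n s := by
        rw [aux_replace_right p hmonic hdeg horth n s hs (Polynomial.X * p (n-1) s) (p n s) hab]
        exact (hh n s hs).symm
      rw [e3, circleIntegral.integral_sub
          (aux_integrable (p n s) a' E hEcont)
          (aux_integrable_smul (Cn n s) (p n s) (Polynomial.X * p (n-1) s) E hEcont),
        circleIntegral.integral_smul, hfa, hf2, smul_eq_mul]
      ring
    -- D = T1 + T2
    have hsplit : (∮ z in C(0, 1), (Polynomial.X * p n s).eval z * (p n s).eval z⁻¹ * E z / z)
        = D - ∮ z in C(0, 1), (p n s).eval z * (Polynomial.X * p n s).eval z⁻¹ * E z / z := by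
      have e5 : (fun z : ℂ => (Polynomial.X * p n s).eval z * (p n s).eval z⁻¹ * E z / z)
          = fun z => (p n s).eval z * (p n s).eval z⁻¹ * ((z + z⁻¹) * E z) / z
            - (p n s).eval z * (Polynomial.X * p n s).eval z⁻¹ * E z / z := by
        funext z
        simp only [Polynomial.eval_mul, Polynomial.eval_X]
        ring
      rw [e5, circleIntegral.integral_sub
          (aux_integrable (p n s) (p n s) (fun z => (z + z⁻¹) * E z) (aux_contOn_omega.mul hEcont))
          (aux_integrable (p n s) (Polynomial.X * p n s) E hEcont)]
    rw [hT1, hT2] at hsplit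
    linear_combination -hsplit
  -- final algebra
  have hκfun : κsq n = fun t => 2 * Real.pi * Complex.I / h n t := funext fun t => hκ n t
  have hne' := hne n s hs
  have hκD : HasDerivAt (κsq n)
      ((0 * h n s - 2 * Real.pi * Complex.I * D) / (h n s)^2) s := by
    rw [hκfun]
    exact (hasDerivAt_const s (2 * Real.pi * Complex.I : ℂ)).div hhD hne'
  have hderiv : deriv (κsq n) s = (0 * h n s - 2 * Real.pi * Complex.I * D) / (h n s)^2 :=
    hκD.deriv
  rw [hderiv, hκ n s, hDval]
  have hpi : (2 * Real.pi * Complex.I : ℂ) ≠ 0 := by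
    simp [Real.pi_ne_zero, Complex.I_ne_zero, Complex.ofReal_ne_zero]
  field_simp
  ring
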